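/- Consider the TRS R over the signature with constant 0, unary symbols s, − and fac, and binary symbols mul and add, consisting of the rules: fac(0) → s(0); fac(s(x)) → mul(s(x), fac(x)); fac(−(x)) → mul(−(x), fac(−(s(x)))); mul(x,0) → 0; mul(0,y) → 0; mul(x,s(y)) → add(mul(x,y), x); mul(s(x),−(y)) → −(mul(s(x),y)); mul(−(x),−(y)) → mul(x,y); add(x,0) → x; add(0,y) → y; add(x,s(y)) → s(add(x,y)); add(s(x),−(s(y))) → add(x,−(y)); add(s(x),−(0)) → s(x); add(−(x),−(y)) → −(add(x,y)). Then R is terminating on the set T = {fac(sⁿ(0)) : n ∈ ℕ}: no term fac(sⁿ(0)) admits an infinite →_R-rewrite sequence. -/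
import Mathlib


namespace Fac

/-- Ground terms over the signature with constant `0`, unary `s`, `-`, `fac`
and binary `mul`, `add`. -/
inductive FT : Type
  | zero : FT
  | s : FT → FT
  | neg : FT → FT
  | fac : FT → FT
  | mul : FT → FT → FT
  | add : FT → FT → FT

open FT

/-- The one-step rewrite relation of the factorial TRS (root steps for all
ground instances of the rules, closed under contexts). -/
inductive FRw : FT → FT → Prop
  | fac0 : FRw (fac zero) (s zero)
  | facs (x : FT) : FRw (fac (s x)) (mul (s x) (fac x))
  | facm (x : FT) : FRw (fac (neg x)) (mul (neg x) (fac (neg (s x))))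
  | mul0r (x : FT) : FRw (mul x zero) zero
  | mul0l (y : FT) : FRw (mul zero y) zero
  | muls (x y : FT) : FRw (mul x (s y)) (add (mul x y) x)
  | mulsm (x y : FT) : FRw (mul (s x) (neg y)) (neg (mul (s x) y))
  | mulmm (x y : FT) : FRw (mul (neg x) (neg y)) (mul x y)
  | add0r (x : FT) : FRw (add x zero) x
  | add0l (y : FT) : FRw (add zero y) y
  | adds (x y : FT) : FRw (add x (s y)) (s (add x y))
  | addsm (x y : FT) : FRw (add (s x) (neg (s y))) (add x (neg y))
  | addsm0 (x : FT) : FRw (add (s x) (neg zero)) (s x)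
  | addmm (x y : FT) : FRw (add (neg x) (neg y)) (neg (add x y))
  | s_c {u v : FT} : FRw u v → FRw (s u) (s v)
  | neg_c {u v : FT} : FRw u v → FRw (neg u) (neg v)
  | fac_c {u v : FT} : FRw u v → FRw (fac u) (fac v)
  | mul_l {u v : FT} (w : FT) : FRw u v → FRw (mul u w) (mul v w)
  | mul_r (w : FT) {u v : FT} : FRw u v → FRw (mul w u) (mul w v)
  | add_l {u v : FT} (w : FT) : FRw u v → FRw (add u w) (add v w)
  | add_r (w : FT) {u v : FT} : FRw u v → FRw (add w u) (add w v)

/-- `sⁿ(0)`. -/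
def sn : ℕ → FT
  | 0 => zero
  | n + 1 => s (sn n)

/-- Interpretation of `fac`. -/
def F : ℕ → ℕ
  | 0 => 4
  | n + 1 => 3 * (n + 1) * F n + 1

lemma F_pos (n : ℕ) : 4 ≤ F n := by
  induction n with
  | zero => simp [F]
  | succ n ih => simp only [F]; nlinarith

lemma F_strictMono : StrictMono F := by
  apply strictMono_nat_of_lt_succ
  intro n
  have := F_pos n
  simp only [F]; nlinarith

/-- Weight of a term. -/
def val : FT → ℕ
  | zero => 2
  | s x => val x + 1
  | neg _ => 0
  | fac x => F (val x)
  | mul x y => 3 * val x * val y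
  | add x y => val x + 2 * val y

/-- Neg-free terms. -/
inductive NF : FT → Prop
  | zero : NF zero
  | s {x} : NF x → NF (s x)
  | fac {x} : NF x → NF (fac x)
  | mul {x y} : NF x → NF y → NF (mul x y)
  | add {x y} : NF x → NF y → NF (add x y)

lemma NF.val_ge {t : FT} (h : NF t) : 2 ≤ val t := by
  induction h with
  | zero => simp [val]
  | s _ ih => simp [val]; omega
  | @fac x _ _ => have := F_pos (val x); simp [val]; omega
  | mul _ _ ih1 ih2 => simp [val]; nlinarith
  | add _ _ ih1 ih2 => simp [val]; omega

lemma step {t t' : FT} (h : FRw t t') (hnf : NF t) : NF t' ∧ val t' < val t := by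
  induction h with
  | fac0 => exact ⟨NF.s NF.zero, by norm_num [val, F]⟩
  | facs x =>
      rcases hnf with _ | _ | h
      rcases h with _ | h
      refine ⟨NF.mul (NF.s h) (NF.fac h), ?_⟩
      have := F_pos (val x)
      simp only [val, F]; nlinarith
  | facm x => rcases hnf with _ | _ | h; cases h
  | mul0r x =>
      rcases hnf with _ | _ | _ | ⟨hx, hy⟩
      have := hx.val_ge
      exact ⟨NF.zero, by simp [val]; nlinarith⟩
  | mul0l y =>
      rcases hnf with _ | _ | _ | ⟨hx, hy⟩
      have := hy.val_ge
      exact ⟨NF.zero, by simp [val]; nlinarith⟩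
  | muls x y =>
      rcases hnf with _ | _ | _ | ⟨hx, hy⟩
      rcases hy with _ | hy
      refine ⟨NF.add (NF.mul hx hy) hx, ?_⟩
      have := hx.val_ge
      simp only [val]; nlinarith
  | mulsm x y => rcases hnf with _ | _ | _ | ⟨hx, hy⟩; cases hy
  | mulmm x y => rcases hnf with _ | _ | _ | ⟨hx, hy⟩; cases hx
  | add0r x =>
      rcases hnf with _ | _ | _ | _ | ⟨hx, hy⟩
      exact ⟨hx, by simp [val]⟩
  | add0l y =>
      rcases hnf with _ | _ | _ | _ | ⟨hx, hy⟩
      have := hy.val_ge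
      exact ⟨hy, by simp [val]; omega⟩
  | adds x y =>
      rcases hnf with _ | _ | _ | _ | ⟨hx, hy⟩
      rcases hy with _ | hy
      exact ⟨NF.s (NF.add hx hy), by simp [val]; omega⟩
  | addsm x y => rcases hnf with _ | _ | _ | _ | ⟨hx, hy⟩; cases hy
  | addsm0 x => rcases hnf with _ | _ | _ | _ | ⟨hx, hy⟩; cases hy
  | addmm x y => rcases hnf with _ | _ | _ | _ | ⟨hx, hy⟩; cases hx
  | s_c _ ih =>
      rcases hnf with _ | h
      obtain ⟨h1, h2⟩ := ih h
      exact ⟨NF.s h1, by simp [val]; omega⟩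
  | neg_c _ _ => cases hnf
  | fac_c _ ih =>
      rcases hnf with _ | _ | h
      obtain ⟨h1, h2⟩ := ih h
      exact ⟨NF.fac h1, by simpa [val] using F_strictMono h2⟩
  | mul_l w _ ih =>
      rcases hnf with _ | _ | _ | ⟨hx, hy⟩
      obtain ⟨h1, h2⟩ := ih hx
      have := hy.val_ge
      refine ⟨NF.mul h1 hy, ?_⟩
      simp only [val]; nlinarith
  | mul_r w _ ih =>
      rcases hnf with _ | _ | _ | ⟨hx, hy⟩
      obtain ⟨h1, h2⟩ := ih hy
      have := hx.val_ge
      refine ⟨NF.mul hx h1, ?_⟩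
      simp only [val]; nlinarith
  | add_l w _ ih =>
      rcases hnf with _ | _ | _ | _ | ⟨hx, hy⟩
      obtain ⟨h1, h2⟩ := ih hx
      exact ⟨NF.add h1 hy, by simp [val]; omega⟩
  | add_r w _ ih =>
      rcases hnf with _ | _ | _ | _ | ⟨hx, hy⟩
      obtain ⟨h1, h2⟩ := ih hy
      exact ⟨NF.add hx h1, by simp [val]; omega⟩

lemma NF_sn (n : ℕ) : NF (sn n) := by
  induction n with
  | zero => exact NF.zero
  | succ n ih => exact NF.s ih

/-- The factorial TRS is terminating on
`T = {fac(sⁿ(0)) : n ∈ ℕ}`. -/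
theorem factorial_TRS_terminating_on_naturals :
    ∀ n : ℕ, ¬ ∃ f : ℕ → FT, f 0 = fac (sn n) ∧
      ∀ k : ℕ, FRw (f k) (f (k + 1)) := by
  intro n ⟨f, hf0, hstep⟩
  have hNF : ∀ k, NF (f k) := by
    intro k
    induction k with
    | zero => rw [hf0]; exact NF.fac (NF_sn n)
    | succ k ih => exact (step (hstep k) ih).1
  have hdec : ∀ k, val (f (k + 1)) < val (f k) := fun k => (step (hstep k) (hNF k)).2
  have hbound : ∀ k, val (f k) + k ≤ val (f 0) := by
    intro k
    induction k with
    | zero => omega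
    | succ k ih => have := hdec k; omega
  have := hbound (val (f 0) + 1)
  omega

end Fac
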